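/- (Zipper Lemma 2) Let π and π' be path decompositions of a common quasi-flow f on a directed acyclic graph, and fix a path P in the support of π. Then there exists a finite sequence of weighted Ryser swaps c_1 R_1, …, c_m R_m with all c_i > 0 such that π'' := π' + Σ_i c_i R_i is a path decomposition (in particular nonnegative) and π''(P) ≥ π(P). -/

import Mathlib

open scoped Classical

namespace StmtDAG

variable {N E : Type*} [Fintype N] [Fintype E] [DecidableEq N] [DecidableEq E]

/-- `(src, tgt, s, t)` describes a directed acyclic graph with finite node type `N` and
finite edge type `E` (parallel edges are allowed, since `E` is an abstract type with
endpoint maps): there is no directed cycle, `s` is the unique node with no incoming edge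
(the source), and `t` is the unique node with no outgoing edge (the sink). -/
def IsDAG (src tgt : E → N) (s t : N) : Prop :=
  (∀ a : N, ¬ Relation.TransGen (fun a b => ∃ e, src e = a ∧ tgt e = b) a a) ∧
  (∀ e, tgt e ≠ s) ∧ (∀ e, src e ≠ t) ∧
  (∀ n, (∀ e, tgt e ≠ n) → n = s) ∧
  (∀ n, (∀ e, src e ≠ n) → n = t)

variable (src tgt : E → N) (s t : N)

/-- A path from `s` to `t`: a nonempty list of consecutive edges starting at `s` and
ending at `t`.  (In a DAG these are in bijective correspondence with the edge *sets* in
which `s` and `t` each appear exactly once and every other node appearing at all appears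
exactly once as a head and once as a tail.) -/
structure GPath where
  /-- the edges of the path, in order from the source to the sink -/
  edges : List E
  ne : edges ≠ []
  chain : edges.Chain' fun e f => tgt e = src f
  first : src (edges.head ne) = s
  last : tgt (edges.getLast ne) = t

/-- A quasi-flow: a nonnegative edge weighting such that, at every node other than the
source and the sink, total in-flow equals total out-flow. -/
def IsQuasiFlow (f : E → ℝ) : Prop :=
  (∀ e, 0 ≤ f e) ∧
  ∀ n : N, n ≠ s → n ≠ t →
    (∑ e : E, if tgt e = n then f e else 0) = (∑ e : E, if src e = n then f e else 0)

/-- `π` is a path decomposition of the quasi-flow `f`: a nonnegative weighting of paths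
whose induced edge weights recover `f`. -/
def IsPathDecomp (f : E → ℝ) (π : GPath src tgt s t → ℝ) : Prop :=
  (∀ P, 0 ≤ π P) ∧
  ∀ e : E, f e = ∑ᶠ P : GPath src tgt s t, if e ∈ P.edges then π P else 0

/-- `P.edges = a ++ b`, split exactly at the node `n`. -/
def SplitsAt (P : GPath src tgt s t) (n : N) (a b : List E) : Prop :=
  P.edges = a ++ b ∧ (∀ h : b ≠ [], src (b.head h) = n) ∧ (b = [] → n = t)

/-- `(Q₁, Q₂)` are the `n`-conjugates of the pair `(P₁, P₂)`, both of which pass through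
the node `n`: `Q₁` follows `P₁` up to `n` and `P₂` thereafter, and vice versa. -/
def IsConjAt (n : N) (P₁ P₂ Q₁ Q₂ : GPath src tgt s t) : Prop :=
  ∃ a₁ b₁ a₂ b₂ : List E,
    SplitsAt src tgt s t P₁ n a₁ b₁ ∧ SplitsAt src tgt s t P₂ n a₂ b₂ ∧
    Q₁.edges = a₁ ++ b₂ ∧ Q₂.edges = a₂ ++ b₁

/-- The indicator (point mass) vector of a path. -/
noncomputable def indP (P₀ : GPath src tgt s t) : GPath src tgt s t → ℝ :=
  fun P => if P = P₀ then 1 else 0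

/-- A Ryser swap: `1_{Q₁} + 1_{Q₂} - 1_{P₁} - 1_{P₂}` where `(Q₁, Q₂)` are the
`n`-conjugates of a pair `(P₁, P₂)` compatible at some node `n`. -/
def IsRyserSwap (R : GPath src tgt s t → ℝ) : Prop :=
  ∃ (n : N) (P₁ P₂ Q₁ Q₂ : GPath src tgt s t),
    IsConjAt src tgt s t n P₁ P₂ Q₁ Q₂ ∧
    R = indP src tgt s t Q₁ + indP src tgt s t Q₂ -
          indP src tgt s t P₁ - indP src tgt s t P₂

/-- The Ryser subspace: the linear span of all Ryser swaps. -/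
noncomputable def RyserSub : Submodule ℝ (GPath src tgt s t → ℝ) :=
  Submodule.span ℝ {R | IsRyserSwap src tgt s t R}

/-- `π` is a probability distribution on the path set. -/
def IsDistP (π : GPath src tgt s t → ℝ) : Prop :=
  (∀ P, 0 ≤ π P) ∧ ∑ᶠ P : GPath src tgt s t, π P = 1

section ZipperAux
variable {src tgt} {s t}

lemma gpath_ext {Q Q' : GPath src tgt s t} (h : Q.edges = Q'.edges) : Q = Q' := by
  cases Q; cases Q'; simp_all

lemma chain_node : ∀ (l : List E), l.Chain' (fun e f => tgt e = src f) →
    ∀ a : N, (∀ h : l ≠ [], src (l.head h) = a) →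
    List.Chain (fun a b => ∃ e, src e = a ∧ tgt e = b) a (l.map tgt)
  | [], _, _, _ => List.Chain.nil
  | e :: l, hch, a, ha => by
    refine List.Chain.cons ⟨e, ha (by simp), rfl⟩ ?_
    refine chain_node l hch.tail (tgt e) (fun h => ?_)
    exact ((List.isChain_cons.mp hch).1 (l.head h) (List.head_mem_head? h)).symm

lemma nodes_nodup (hdag : IsDAG src tgt s t) (Q : GPath src tgt s t) :
    (s :: Q.edges.map tgt).Nodup := by
  have hch : List.Chain (Relation.TransGen fun a b => ∃ e, src e = a ∧ tgt e = b) s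
      (Q.edges.map tgt) :=
    List.IsChain.imp (fun _ _ h => Relation.TransGen.single h)
      (chain_node Q.edges Q.chain s (fun _ => Q.first))
  have hp := List.isChain_iff_pairwise.mp hch
  exact hp.imp (fun {a b} (h : Relation.TransGen _ a b) (heq : a = b) => hdag.1 b (by subst heq; exact h))

lemma edges_nodup (hdag : IsDAG src tgt s t) (Q : GPath src tgt s t) : Q.edges.Nodup :=
  ((nodes_nodup hdag Q).of_cons).of_map _

lemma srcs_eq : ∀ (l : List E), l.Chain' (fun e f => tgt e = src f) → ∀ (h : l ≠ []),
    l.map src ++ [tgt (l.getLast h)] = src (l.head h) :: l.map tgt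
  | [e], _, _ => rfl
  | e :: f :: r, hch, _ => by
    have ih := srcs_eq (f :: r) hch.tail (by simp)
    have hef : tgt e = src f := (List.isChain_cons_cons.mp hch).1
    simpa [hef] using congrArg (List.cons (src e)) ih

lemma nodesS_nodup (hdag : IsDAG src tgt s t) (Q : GPath src tgt s t) :
    (Q.edges.map src ++ [t]).Nodup := by
  have h := srcs_eq Q.edges Q.chain Q.ne
  rw [Q.first, Q.last] at h
  rw [h]
  exact nodes_nodup hdag Q

/-- the node-at-index list: entry `i` is `src edges[i]` for `i < len`, and `t` at `len`. -/
lemma src_getElem_inj (hdag : IsDAG src tgt s t) (Q : GPath src tgt s t) {i j : ℕ}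
    (hi : i < Q.edges.length) (hj : j < Q.edges.length)
    (h : src (Q.edges[i]) = src (Q.edges[j])) : i = j := by
  have hn := nodesS_nodup hdag Q
  have hlen : (Q.edges.map src ++ [t]).length = Q.edges.length + 1 := by simp
  have e1 : (Q.edges.map src ++ [t])[i]'(by omega) = src Q.edges[i] := by
    rw [List.getElem_append_left (by simpa using hi)]; simp
  have e2 : (Q.edges.map src ++ [t])[j]'(by omega) = src Q.edges[j] := by
    rw [List.getElem_append_left (by simpa using hj)]; simp
  exact (hn.getElem_inj_iff (hi := by omega) (hj := by omega)).mp (by rw [e1, e2, h])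

lemma src_getElem_succ (Q : GPath src tgt s t) {i : ℕ} (h : i + 1 < Q.edges.length) :
    src (Q.edges[i + 1]) = tgt (Q.edges[i]'(by omega)) := by
  have := List.isChain_iff_getElem.mp Q.chain i (by omega)
  simpa [List.get_eq_getElem] using this.symm

lemma src_getElem_zero (Q : GPath src tgt s t) (h : 0 < Q.edges.length) :
    src (Q.edges[0]) = s := by
  have : Q.edges.head Q.ne = Q.edges[0] := by
    rw [List.head_eq_getElem]
  rw [← this, Q.first]



lemma getLast_eq_of_eq {l l' : List E} (h : l = l') (hl : l ≠ []) (hl' : l' ≠ []) :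
    l.getLast hl = l'.getLast hl' := by subst h; rfl

lemma head_eq_of_eq {l l' : List E} (h : l = l') (hl : l ≠ []) (hl' : l' ≠ []) :
    l.head hl = l'.head hl' := by subst h; rfl

lemma getElem_eq_of_eq {l l' : List E} (h : l = l') {i : ℕ} (hi : i < l.length) :
    l[i] = l'[i]'(h ▸ hi) := by subst h; rfl

lemma getElem_idx_congr {l : List E} {i j : ℕ} (h : i = j) (hi : i < l.length) :
    l[i] = l[j]'(h ▸ hi) := by subst h; rfl

lemma gpath_finite (hdag : IsDAG src tgt s t) : Finite (GPath src tgt s t) := by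
  haveI : Finite {l : List E // l.length ≤ Fintype.card E} :=
    (List.finite_length_le E (Fintype.card E)).to_subtype
  exact Finite.of_injective
    (fun Q : GPath src tgt s t =>
      (⟨Q.edges, (edges_nodup hdag Q).length_le_card⟩ : {l : List E // l.length ≤ Fintype.card E}))
    (fun Q Q' h => gpath_ext (congrArg Subtype.val h))

variable (src tgt s t)

noncomputable def clS [Fintype (GPath src tgt s t)] (P : GPath src tgt s t) (j : ℕ) :
    Finset (GPath src tgt s t) :=
  Finset.univ.filter (fun Q => P.edges.take j <+: Q.edges)

noncomputable def AA [Fintype (GPath src tgt s t)] (P : GPath src tgt s t) (j : ℕ)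
    (σ : GPath src tgt s t → ℝ) : ℝ :=
  ∑ Q ∈ clS src tgt s t P j, σ Q

variable {src tgt s t}

section WithFintype
variable [Fintype (GPath src tgt s t)] {P Q : GPath src tgt s t} {j : ℕ}

lemma mem_clS : Q ∈ clS src tgt s t P j ↔ P.edges.take j <+: Q.edges := by
  simp [clS]

lemma clS_zero (P : GPath src tgt s t) : clS src tgt s t P 0 = Finset.univ := by
  ext Q; simp [mem_clS]

lemma take_succ_eq (hj : j < P.edges.length) :
    P.edges.take (j+1) = P.edges.take j ++ [P.edges[j]] := by
  rw [List.take_succ, List.getElem?_eq_getElem hj]; rfl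

lemma clS_mono : clS src tgt s t P (j+1) ⊆ clS src tgt s t P j := by
  intro Q hQ
  rw [mem_clS] at hQ ⊢
  refine List.IsPrefix.trans ?_ hQ
  have : (P.edges.take (j+1)).take j = P.edges.take j := by
    rw [List.take_take]; congr 1; omega
  exact this ▸ List.take_prefix _ _

lemma take_eq_of_mem (hj : j ≤ P.edges.length) (hQ : Q ∈ clS src tgt s t P j) :
    Q.edges.take j = P.edges.take j := by
  rw [mem_clS] at hQ
  have hl : (P.edges.take j).length = j := by simp [hj]
  rw [List.prefix_iff_eq_take, hl] at hQ
  exact hQ.symm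

lemma length_gt (hdag : IsDAG src tgt s t) (hj : j < P.edges.length)
    (hQ : Q ∈ clS src tgt s t P j) : j < Q.edges.length := by
  rw [mem_clS] at hQ
  have hlen : j ≤ Q.edges.length := by
    have := hQ.length_le; simpa [Nat.min_def, hj.le] using this
  rcases lt_or_eq_of_le hlen with h | h
  · exact h
  · exfalso
    have hQe : Q.edges = P.edges.take j :=
      (hQ.eq_of_length_le (by simp [hj.le]; omega)).symm
    have hj0 : 0 < j := by
      by_contra h'
      exact Q.ne (by rw [hQe]; simp [Nat.le_zero.mp (not_lt.mp h')])
    have hne' : P.edges.take j ≠ [] := by rw [← hQe]; exact Q.ne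
    have hlast : Q.edges.getLast Q.ne = P.edges[j-1]'(by omega) := by
      rw [getLast_eq_of_eq hQe Q.ne hne', List.getLast_eq_getElem, List.getElem_take]
      congr 1
      simp [Nat.min_def, hj.le]
    have h1 : tgt (P.edges[j-1]'(by omega)) = t := by rw [← hlast]; exact Q.last
    have h2 : src (P.edges[j]) = tgt (P.edges[j-1]'(by omega)) := by
      have := src_getElem_succ P (i := j-1) (by omega)
      convert this using 3 <;> omega
    exact hdag.2.2.1 (P.edges[j]) (h2.trans h1)

lemma getElem_eq_of_mem (hj : j ≤ P.edges.length) (hQ : Q ∈ clS src tgt s t P j)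
    {i : ℕ} (hi : i < j) :
    Q.edges[i]'(by
      have := (mem_clS.mp hQ).length_le
      simp [Nat.min_def, hj] at this; omega) = P.edges[i]'(by omega) := by
  have h := take_eq_of_mem hj hQ
  have h1 : i < (Q.edges.take j).length := by
    rw [h]; simp [Nat.min_def, hj]; omega
  calc Q.edges[i]'_ = (Q.edges.take j)[i]'h1 := by rw [List.getElem_take]
    _ = (P.edges.take j)[i]'(h ▸ h1) := by congr 1
    _ = P.edges[i]'(by omega) := by rw [List.getElem_take]

lemma src_getElem_of_mem (hj : j < P.edges.length) (hQ : Q ∈ clS src tgt s t P j)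
    (hlen : j < Q.edges.length) :
    src (Q.edges[j]) = src (P.edges[j]) := by
  rcases Nat.eq_zero_or_pos j with rfl | hj0
  · rw [src_getElem_zero Q hlen, src_getElem_zero P hj]
  · have h1 : src (Q.edges[j]) = tgt (Q.edges[j-1]'(by omega)) := by
      have := src_getElem_succ Q (i := j-1) (by omega)
      convert this using 3 <;> omega
    have h2 : src (P.edges[j]) = tgt (P.edges[j-1]'(by omega)) := by
      have := src_getElem_succ P (i := j-1) (by omega)
      convert this using 3 <;> omega
    rw [h1, h2, getElem_eq_of_mem hj.le hQ (by omega)]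

lemma mem_clS_succ_iff (hdag : IsDAG src tgt s t) (hj : j < P.edges.length)
    (hQ : Q ∈ clS src tgt s t P j) :
    Q ∈ clS src tgt s t P (j+1) ↔
      Q.edges[j]'(length_gt hdag hj hQ) = P.edges[j] := by
  have hlen := length_gt hdag hj hQ
  constructor
  · intro h
    exact getElem_eq_of_mem (by omega) h (by omega)
  · intro h
    rw [mem_clS, take_succ_eq hj]
    have h1 : Q.edges.take (j+1) = P.edges.take j ++ [P.edges[j]] := by
      rw [take_succ_eq (P := Q) hlen, take_eq_of_mem hj.le hQ, h]
    exact h1 ▸ List.take_prefix _ _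
  
lemma mem_clS_succ_of_mem (hdag : IsDAG src tgt s t) (hj : j < P.edges.length)
    (hQ : Q ∈ clS src tgt s t P j) (he : P.edges[j] ∈ Q.edges) :
    Q ∈ clS src tgt s t P (j+1) := by
  have hlen := length_gt hdag hj hQ
  set p := Q.edges.idxOf (P.edges[j]) with hp
  have hplt : p < Q.edges.length := List.idxOf_lt_length_iff.mpr he
  have hgetp : Q.edges[p] = P.edges[j] := List.getElem_idxOf hplt
  have hsrc : src (Q.edges[p]) = src (Q.edges[j]) := by
    rw [hgetp, src_getElem_of_mem hj hQ hlen]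
  have hpj : p = j := src_getElem_inj hdag Q hplt hlen hsrc
  rw [mem_clS_succ_iff hdag hj hQ]
  rw [getElem_idx_congr hpj.symm hlen]
  exact hgetp

lemma clS_top (hdag : IsDAG src tgt s t) (P : GPath src tgt s t) :
    clS src tgt s t P P.edges.length = {P} := by
  ext Q
  simp only [mem_clS, Finset.mem_singleton, List.take_length]
  constructor
  · rintro ⟨r, hr⟩
    rcases List.eq_nil_or_concat r with rfl | ⟨r', e, rfl⟩
    · exact (gpath_ext (by rw [← hr, List.append_nil])).symm
    · exfalso
      have hQe : Q.edges = P.edges ++ (r' ++ [e]) := by rw [← hr, List.concat_eq_append]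
      have hgl : Q.edges.getLast Q.ne ∈ Q.edges := List.getLast_mem Q.ne
      -- src of the first element of r' ++ [e] equals t
      have hne : P.edges ++ (r' ++ [e]) ≠ [] := by simp
      have hidx : P.edges.length < Q.edges.length := by
        rw [hQe]; simp
      have hsrc : src (Q.edges[P.edges.length]'hidx) = t := by
        rcases Nat.eq_zero_or_pos P.edges.length with h0 | h0
        · exact (P.ne (List.eq_nil_of_length_eq_zero h0)).elim
        · have h1 : src (Q.edges[P.edges.length]'hidx) = tgt (Q.edges[P.edges.length - 1]'(by omega)) := by
            have := src_getElem_succ Q (i := P.edges.length - 1) (by omega)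
            convert this using 3 <;> omega
          have h2 : Q.edges[P.edges.length - 1]'(by omega) = P.edges.getLast P.ne := by
            rw [getElem_eq_of_eq hQe (by omega), List.getElem_append_left (by omega),
              List.getLast_eq_getElem]
          rw [h1, h2, P.last]
      exact hdag.2.2.1 _ hsrc
  · rintro rfl; exact ⟨[], by simp⟩

end WithFintype











section Part3
variable [Fintype (GPath src tgt s t)]

lemma decomp_sum {f : E → ℝ} {σ : GPath src tgt s t → ℝ}
    (hσ : IsPathDecomp src tgt s t f σ) (e : E) :
    f e = ∑ Q : GPath src tgt s t, if e ∈ Q.edges then σ Q else 0 := by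
  rw [hσ.2 e, finsum_eq_sum_of_fintype]

lemma sum_src_s (hdag : IsDAG src tgt s t) (Q : GPath src tgt s t) :
    ∑ e : E, (if src e = s ∧ e ∈ Q.edges then (1:ℝ) else 0) = 1 := by
  have hpt : ∀ e : E, (if src e = s ∧ e ∈ Q.edges then (1:ℝ) else 0) =
      if e = Q.edges.head Q.ne then 1 else 0 := by
    intro e
    by_cases h : e = Q.edges.head Q.ne
    · subst h
      rw [if_pos ⟨Q.first, List.head_mem Q.ne⟩, if_pos rfl]
    · rw [if_neg h]
      by_cases h2 : src e = s ∧ e ∈ Q.edges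
      · exfalso
        obtain ⟨i, hi, hei⟩ := List.mem_iff_getElem.mp h2.2
        have h0 : 0 < Q.edges.length := List.length_pos_iff.mpr Q.ne
        have : src (Q.edges[i]) = src (Q.edges[0]) := by
          rw [hei, h2.1, src_getElem_zero Q h0]
        have hi0 : i = 0 := src_getElem_inj hdag Q hi h0 this
        subst hi0
        refine h ?_
        rw [← hei]
        exact (List.head_eq_getElem Q.ne).symm
      · rw [if_neg h2]
  rw [Finset.sum_congr rfl (fun e _ => hpt e), Finset.sum_ite_eq' Finset.univ]
  simp

lemma total_mass (hdag : IsDAG src tgt s t) {f : E → ℝ} {σ : GPath src tgt s t → ℝ}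
    (hσ : IsPathDecomp src tgt s t f σ) :
    ∑ Q : GPath src tgt s t, σ Q = ∑ e : E, if src e = s then f e else 0 := by
  have h1 : ∀ e : E, (if src e = s then f e else 0) =
      ∑ Q : GPath src tgt s t, if src e = s ∧ e ∈ Q.edges then σ Q else 0 := by
    intro e
    by_cases h : src e = s
    · rw [if_pos h, decomp_sum hσ e]
      exact Finset.sum_congr rfl (fun Q _ => by simp [h])
    · rw [if_neg h]
      rw [Finset.sum_congr rfl (fun Q _ => by simp [h] : ∀ Q ∈ Finset.univ, _ = (0:ℝ))]
      simp
  rw [Finset.sum_congr rfl (fun e _ => h1 e), Finset.sum_comm]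
  refine (Finset.sum_congr rfl (fun Q _ => ?_)).symm
  have h2 : ∀ e : E, (if src e = s ∧ e ∈ Q.edges then σ Q else 0) =
      σ Q * (if src e = s ∧ e ∈ Q.edges then (1:ℝ) else 0) := by
    intro e; by_cases h : src e = s ∧ e ∈ Q.edges <;> simp [h]
  rw [Finset.sum_congr rfl (fun e _ => h2 e), ← Finset.mul_sum, sum_src_s hdag Q, mul_one]

lemma sum_indP (X : GPath src tgt s t) (sfin : Finset (GPath src tgt s t)) :
    ∑ Q ∈ sfin, indP src tgt s t X Q = if X ∈ sfin then (1:ℝ) else 0 := by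
  simp only [indP]
  exact Finset.sum_ite_eq' sfin X (fun _ => (1:ℝ))

lemma sum_chi (e : E) (X : GPath src tgt s t) :
    ∑ Q : GPath src tgt s t, (if e ∈ Q.edges then indP src tgt s t X Q else 0)
      = if e ∈ X.edges then (1:ℝ) else 0 := by
  have hpt : ∀ Q : GPath src tgt s t, (if e ∈ Q.edges then indP src tgt s t X Q else 0)
      = if Q = X then (if e ∈ X.edges then (1:ℝ) else 0) else 0 := by
    intro Q
    by_cases h : Q = X
    · subst h; by_cases h2 : e ∈ Q.edges <;> simp [indP, h2]
    · by_cases h2 : e ∈ Q.edges <;> simp [indP, h, h2]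
  rw [Finset.sum_congr rfl (fun Q _ => hpt Q), Finset.sum_ite_eq' Finset.univ]
  simp

lemma chi_count (hdag : IsDAG src tgt s t) (e : E) (X : GPath src tgt s t) :
    (if e ∈ X.edges then (1:ℝ) else 0) = ((X.edges.count e : ℕ) : ℝ) := by
  by_cases h : e ∈ X.edges
  · rw [if_pos h, List.count_eq_one_of_mem (edges_nodup hdag X) h]; norm_num
  · rw [if_neg h, List.count_eq_zero_of_not_mem h]; norm_num

lemma swap_edge_sum_zero (hdag : IsDAG src tgt s t) {Q1 Q2 Q1' Q2' : GPath src tgt s t}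
    {a₁ b₁ a₂ b₂ : List E}
    (h1 : Q1.edges = a₁ ++ b₁) (h2 : Q2.edges = a₂ ++ b₂)
    (h1' : Q1'.edges = a₁ ++ b₂) (h2' : Q2'.edges = a₂ ++ b₁) (e : E) :
    ∑ Q : GPath src tgt s t, (if e ∈ Q.edges then
      (indP src tgt s t Q1' Q + indP src tgt s t Q2' Q
        - indP src tgt s t Q1 Q - indP src tgt s t Q2 Q) else 0) = 0 := by
  have hpt : ∀ Q : GPath src tgt s t, (if e ∈ Q.edges then
      (indP src tgt s t Q1' Q + indP src tgt s t Q2' Q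
        - indP src tgt s t Q1 Q - indP src tgt s t Q2 Q) else 0)
      = (if e ∈ Q.edges then indP src tgt s t Q1' Q else 0)
        + (if e ∈ Q.edges then indP src tgt s t Q2' Q else 0)
        - (if e ∈ Q.edges then indP src tgt s t Q1 Q else 0)
        - (if e ∈ Q.edges then indP src tgt s t Q2 Q else 0) := by
    intro Q; by_cases h : e ∈ Q.edges <;> simp [h]
  rw [Finset.sum_congr rfl (fun Q _ => hpt Q)]
  rw [Finset.sum_sub_distrib, Finset.sum_sub_distrib, Finset.sum_add_distrib]
  rw [sum_chi, sum_chi, sum_chi, sum_chi]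
  rw [chi_count hdag, chi_count hdag, chi_count hdag, chi_count hdag]
  rw [h1, h2, h1', h2']
  push_cast [List.count_append]
  ring

lemma conj_construct (hdag : IsDAG src tgt s t) {Q1 Q2 : GPath src tgt s t} {nn : N}
    {a₁ b₁ a₂ b₂ : List E}
    (h1 : Q1.edges = a₁ ++ b₁) (h2 : Q2.edges = a₂ ++ b₂)
    (hb₁ : b₁ ≠ []) (hb₂ : b₂ ≠ [])
    (hn₁ : src (b₁.head hb₁) = nn) (hn₂ : src (b₂.head hb₂) = nn) :
    ∃ Q1' Q2' : GPath src tgt s t, Q1'.edges = a₁ ++ b₂ ∧ Q2'.edges = a₂ ++ b₁ ∧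
      IsConjAt src tgt s t nn Q1 Q2 Q1' Q2' := by
  have c1 := List.isChain_append.mp (h1 ▸ Q1.chain)
  have c2 := List.isChain_append.mp (h2 ▸ Q2.chain)
  -- glue chains
  have glue : ∀ (a b : List E) (hb : b ≠ []), a.Chain' (fun e f => tgt e = src f) →
      b.Chain' (fun e f => tgt e = src f) →
      (∀ x ∈ a.getLast?, tgt x = nn) → src (b.head hb) = nn →
      (a ++ b).Chain' (fun e f => tgt e = src f) := by
    intro a b hb hca hcb hja hjb
    refine List.isChain_append.mpr ⟨hca, hcb, ?_⟩
    intro x hx y hy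
    have hy' : y = b.head hb := by
      rw [List.head?_eq_head hb] at hy
      exact (Option.mem_some_iff.mp hy).symm
    rw [hy', hjb, hja x hx]
  have hja1 : ∀ x ∈ a₁.getLast?, tgt x = nn := by
    intro x hx
    have := c1.2.2 x hx (b₁.head hb₁) (List.head_mem_head? hb₁)
    rw [this, hn₁]
  have hja2 : ∀ x ∈ a₂.getLast?, tgt x = nn := by
    intro x hx
    have := c2.2.2 x hx (b₂.head hb₂) (List.head_mem_head? hb₂)
    rw [this, hn₂]
  have hne1' : a₁ ++ b₂ ≠ [] := by simp [hb₂]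
  have hne2' : a₂ ++ b₁ ≠ [] := by simp [hb₁]
  have hfirst : ∀ (a b b' : List E) (hb : b ≠ []) (hb' : b' ≠ []) (hab : a ++ b ≠ [])
      (hab' : a ++ b' ≠ []) (Q : GPath src tgt s t) (hQ : Q.edges = a ++ b),
      src (b.head hb) = nn → src (b'.head hb') = nn → src ((a ++ b').head hab') = s := by
    intro a b b' hb hb' hab hab' Q hQ hnb hnb'
    rcases eq_or_ne a [] with ha | ha
    · rw [List.head_append_right hab' ha, hnb', ← hnb]
      have hq : Q.edges.head Q.ne = b.head hb :=
        head_eq_of_eq (by rw [hQ, ha, List.nil_append]) Q.ne hb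
      rw [← hq]
      exact Q.first
    · rw [List.head_append_of_ne_nil ha]
      have hq : Q.edges.head Q.ne = a.head ha := by
        rw [head_eq_of_eq hQ Q.ne (by simp [ha])]
        exact List.head_append_of_ne_nil ha
      rw [← hq]
      exact Q.first
  have hfirst1 : src ((a₁ ++ b₂).head hne1') = s :=
    hfirst a₁ b₁ b₂ hb₁ hb₂ (by simp [hb₁]) hne1' Q1 h1 hn₁ hn₂
  have hfirst2 : src ((a₂ ++ b₁).head hne2') = s :=
    hfirst a₂ b₂ b₁ hb₂ hb₁ (by simp [hb₂]) hne2' Q2 h2 hn₂ hn₁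
  have hlast1 : tgt ((a₁ ++ b₂).getLast hne1') = t := by
    rw [List.getLast_append_of_ne_nil (h₂ := hb₂)]
    have := getLast_eq_of_eq h2 Q2.ne (by simp [hb₂])
    rw [List.getLast_append_of_ne_nil (h₂ := hb₂)] at this
    rw [← this]; exact Q2.last
  have hlast2 : tgt ((a₂ ++ b₁).getLast hne2') = t := by
    rw [List.getLast_append_of_ne_nil (h₂ := hb₁)]
    have := getLast_eq_of_eq h1 Q1.ne (by simp [hb₁])
    rw [List.getLast_append_of_ne_nil (h₂ := hb₁)] at this
    rw [← this]; exact Q1.last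
  refine ⟨⟨a₁ ++ b₂, hne1', glue a₁ b₂ hb₂ c1.1 c2.2.1 hja1 hn₂, hfirst1, hlast1⟩,
          ⟨a₂ ++ b₁, hne2', glue a₂ b₁ hb₁ c2.1 c1.2.1 hja2 hn₁, hfirst2, hlast2⟩,
          rfl, rfl, a₁, b₁, a₂, b₂,
          ⟨h1, fun _ => hn₁, fun h => absurd h hb₁⟩,
          ⟨h2, fun _ => hn₂, fun h => absurd h hb₂⟩, rfl, rfl⟩

lemma AA_swap (P : GPath src tgt s t) (j : ℕ) (σ : GPath src tgt s t → ℝ) (c : ℝ)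
    (Q1 Q2 Q1' Q2' : GPath src tgt s t) :
    AA src tgt s t P j (σ + c • (indP src tgt s t Q1' + indP src tgt s t Q2'
        - indP src tgt s t Q1 - indP src tgt s t Q2))
      = AA src tgt s t P j σ + c *
        ((if Q1' ∈ clS src tgt s t P j then (1:ℝ) else 0)
          + (if Q2' ∈ clS src tgt s t P j then (1:ℝ) else 0)
          - (if Q1 ∈ clS src tgt s t P j then (1:ℝ) else 0)
          - (if Q2 ∈ clS src tgt s t P j then (1:ℝ) else 0)) := by
  unfold AA
  have hpt : ∀ Q ∈ clS src tgt s t P j,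
      (σ + c • (indP src tgt s t Q1' + indP src tgt s t Q2'
        - indP src tgt s t Q1 - indP src tgt s t Q2)) Q
      = σ Q + c * (indP src tgt s t Q1' Q + indP src tgt s t Q2' Q
        - indP src tgt s t Q1 Q - indP src tgt s t Q2 Q) := by
    intro Q _
    simp [smul_eq_mul]
  rw [Finset.sum_congr rfl hpt, Finset.sum_add_distrib, ← Finset.mul_sum]
  congr 2
  rw [Finset.sum_sub_distrib, Finset.sum_sub_distrib, Finset.sum_add_distrib,
    sum_indP, sum_indP, sum_indP, sum_indP]

lemma stage (hdag : IsDAG src tgt s t) (f : E → ℝ) (P : GPath src tgt s t) {j : ℕ}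
    (hj : j < P.edges.length) (v : ℝ)
    (hfe : v ≤ f (P.edges[j]'hj)) :
    ∀ n : ℕ, ∀ σ : GPath src tgt s t → ℝ,
      ((((clS src tgt s t P j ∪ Finset.univ.filter (fun Q => P.edges[j]'hj ∈ Q.edges))
          \ clS src tgt s t P (j+1)).filter (fun Q => 0 < σ Q)).card ≤ n) →
      IsPathDecomp src tgt s t f σ → v ≤ AA src tgt s t P j σ →
      ∃ (m : ℕ) (c : Fin m → ℝ) (R : Fin m → (GPath src tgt s t → ℝ)),
        (∀ i, 0 < c i ∧ IsRyserSwap src tgt s t (R i)) ∧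
        IsPathDecomp src tgt s t f (σ + ∑ i, c i • R i) ∧
        v ≤ AA src tgt s t P (j+1) (σ + ∑ i, c i • R i) := by
  intro n
  induction n with
  | zero =>
    intro σ hμ hσ hA
    by_cases hdone : v ≤ AA src tgt s t P (j+1) σ
    · exact ⟨0, Fin.elim0, Fin.elim0, fun i => i.elim0, by simpa using hσ, by simpa using hdone⟩
    · exfalso
      have hd : AA src tgt s t P (j+1) σ < v := not_le.mp hdone
      have hsub1 : clS src tgt s t P (j+1) ⊆ clS src tgt s t P j := clS_mono
      have hsplit1 := Finset.sum_sdiff (f := σ) hsub1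
      have hQ1ex : ∃ Q1 ∈ clS src tgt s t P j \ clS src tgt s t P (j+1), 0 < σ Q1 := by
        by_contra hcon
        push_neg at hcon
        have hz : ∑ Q ∈ clS src tgt s t P j \ clS src tgt s t P (j+1), σ Q = 0 :=
          Finset.sum_eq_zero (fun Q hQ => le_antisymm (hcon Q hQ) (hσ.1 Q))
        have : AA src tgt s t P j σ = AA src tgt s t P (j+1) σ := by
          unfold AA; rw [← hsplit1, hz, zero_add]
        rw [this] at hA
        linarith
      obtain ⟨Q1, hQ1B, hQ1pos⟩ := hQ1ex
      have : Q1 ∈ (((clS src tgt s t P j ∪ Finset.univ.filter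
          (fun Q => P.edges[j]'hj ∈ Q.edges)) \ clS src tgt s t P (j+1)).filter
          (fun Q => 0 < σ Q)) := by
        rw [Finset.mem_filter, Finset.mem_sdiff, Finset.mem_union]
        rw [Finset.mem_sdiff] at hQ1B
        exact ⟨⟨Or.inl hQ1B.1, hQ1B.2⟩, hQ1pos⟩
      have := Finset.card_pos.mpr ⟨Q1, this⟩
      omega
  | succ n ih =>
    intro σ hμ hσ hA
    by_cases hdone : v ≤ AA src tgt s t P (j+1) σ
    · exact ⟨0, Fin.elim0, Fin.elim0, fun i => i.elim0, by simpa using hσ, by simpa using hdone⟩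
    have hd : AA src tgt s t P (j+1) σ < v := not_le.mp hdone
    have hsub1 : clS src tgt s t P (j+1) ⊆ clS src tgt s t P j := clS_mono
    have hsplit1 := Finset.sum_sdiff (f := σ) hsub1
    have hQ1ex : ∃ Q1 ∈ clS src tgt s t P j \ clS src tgt s t P (j+1), 0 < σ Q1 := by
      by_contra hcon
      push_neg at hcon
      have hz : ∑ Q ∈ clS src tgt s t P j \ clS src tgt s t P (j+1), σ Q = 0 :=
        Finset.sum_eq_zero (fun Q hQ => le_antisymm (hcon Q hQ) (hσ.1 Q))
      have : AA src tgt s t P j σ = AA src tgt s t P (j+1) σ := by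
        unfold AA; rw [← hsplit1, hz, zero_add]
      rw [this] at hA
      linarith
    obtain ⟨Q1, hQ1B, hQ1pos⟩ := hQ1ex
    have hsub2 : clS src tgt s t P (j+1) ⊆
        Finset.univ.filter (fun Q => P.edges[j]'hj ∈ Q.edges) := by
      intro Q hQ
      simp only [Finset.mem_filter, Finset.mem_univ, true_and]
      refine (mem_clS.mp hQ).subset ?_
      rw [take_succ_eq hj]
      exact List.mem_append_right _ (List.mem_singleton_self _)
    have hfes : f (P.edges[j]'hj)
        = ∑ Q ∈ Finset.univ.filter (fun Q => P.edges[j]'hj ∈ Q.edges), σ Q := by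
      rw [decomp_sum hσ, Finset.sum_filter]
    have hsplit2 := Finset.sum_sdiff (f := σ) hsub2
    have hQ2ex : ∃ Q2 ∈ Finset.univ.filter (fun Q => P.edges[j]'hj ∈ Q.edges)
        \ clS src tgt s t P (j+1), 0 < σ Q2 := by
      by_contra hcon
      push_neg at hcon
      have hz : ∑ Q ∈ Finset.univ.filter (fun Q => P.edges[j]'hj ∈ Q.edges)
          \ clS src tgt s t P (j+1), σ Q = 0 :=
        Finset.sum_eq_zero (fun Q hQ => le_antisymm (hcon Q hQ) (hσ.1 Q))
      have : f (P.edges[j]'hj) = AA src tgt s t P (j+1) σ := by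
        unfold AA; rw [hfes, ← hsplit2, hz, zero_add]
      linarith
    obtain ⟨Q2, hQ2C, hQ2pos⟩ := hQ2ex
    rw [Finset.mem_sdiff] at hQ1B
    rw [Finset.mem_sdiff, Finset.mem_filter] at hQ2C
    obtain ⟨hQ1j, hQ1n⟩ := hQ1B
    obtain ⟨⟨-, hQ2e⟩, hQ2n⟩ := hQ2C
    -- basic facts
    have hlen1 : j < Q1.edges.length := length_gt hdag hj hQ1j
    have he1 : P.edges[j]'hj ∉ Q1.edges :=
      fun h => hQ1n (mem_clS_succ_of_mem hdag hj hQ1j h)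
    have hQ2nj : Q2 ∉ clS src tgt s t P j :=
      fun h => hQ2n (mem_clS_succ_of_mem hdag hj h hQ2e)
    -- splits
    have hplt : Q2.edges.idxOf (P.edges[j]'hj) < Q2.edges.length :=
      List.idxOf_lt_length_iff.mpr hQ2e
    have hgetp : Q2.edges[Q2.edges.idxOf (P.edges[j]'hj)]'hplt = P.edges[j]'hj :=
      List.getElem_idxOf hplt
    have h1 : Q1.edges = Q1.edges.take j ++ Q1.edges.drop j :=
      (List.take_append_drop j Q1.edges).symm
    have h2 : Q2.edges = Q2.edges.take (Q2.edges.idxOf (P.edges[j]'hj))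
        ++ Q2.edges.drop (Q2.edges.idxOf (P.edges[j]'hj)) :=
      (List.take_append_drop _ Q2.edges).symm
    have hb₁ : Q1.edges.drop j ≠ [] :=
      List.length_pos_iff.mp (by rw [List.length_drop]; omega)
    have hb₂ : Q2.edges.drop (Q2.edges.idxOf (P.edges[j]'hj)) ≠ [] :=
      List.length_pos_iff.mp (by rw [List.length_drop]; omega)
    have hn₁ : src ((Q1.edges.drop j).head hb₁) = src (P.edges[j]'hj) := by
      rw [List.head_drop]
      exact src_getElem_of_mem hj hQ1j hlen1
    have hn₂ : src ((Q2.edges.drop (Q2.edges.idxOf (P.edges[j]'hj))).head hb₂)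
        = src (P.edges[j]'hj) := by
      rw [List.head_drop, hgetp]
    obtain ⟨Q1', Q2', h1', h2', hconj⟩ := conj_construct hdag h1 h2 hb₁ hb₂ hn₁ hn₂
    have hb2h : (Q2.edges.drop (Q2.edges.idxOf (P.edges[j]'hj))).head hb₂
        = P.edges[j]'hj := by rw [List.head_drop, hgetp]
    -- key memberships
    have hta : Q1.edges.take j = P.edges.take j := take_eq_of_mem hj.le hQ1j
    have hQ1'cl : Q1' ∈ clS src tgt s t P (j+1) := by
      rw [mem_clS, take_succ_eq hj]
      refine ⟨(Q2.edges.drop (Q2.edges.idxOf (P.edges[j]'hj))).tail, ?_⟩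
      rw [h1', hta]
      rw [List.append_assoc, List.singleton_append]
      congr 1
      have hct := List.cons_head_tail hb₂
      rw [hb2h] at hct
      exact hct
    have hQ1'ej : P.edges[j]'hj ∈ Q1'.edges := by
      rw [h1']
      refine List.mem_append_right _ ?_
      have hm := List.head_mem hb₂
      rw [hb2h] at hm
      exact hm
    have hpa : (Q2.edges.take (Q2.edges.idxOf (P.edges[j]'hj))).length
        = Q2.edges.idxOf (P.edges[j]'hj) := by rw [List.length_take]; omega
    have hQ2'nj : Q2' ∉ clS src tgt s t P j := by
      intro hmem
      have hlen2' : j < Q2'.edges.length := length_gt hdag hj hmem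
      have hplt' : Q2.edges.idxOf (P.edges[j]'hj) < Q2'.edges.length := by
        rw [h2', List.length_append, hpa]
        have := List.length_pos_iff.mpr hb₁
        omega
      have hgp : Q2'.edges[Q2.edges.idxOf (P.edges[j]'hj)]'hplt'
          = (Q1.edges.drop j).head hb₁ := by
        refine (getElem_eq_of_eq h2' hplt').trans ?_
        rw [List.getElem_append_right (by omega : (Q2.edges.take
          (Q2.edges.idxOf (P.edges[j]'hj))).length ≤ Q2.edges.idxOf (P.edges[j]'hj))]
        have hz : Q2.edges.idxOf (P.edges[j]'hj) -
            (Q2.edges.take (Q2.edges.idxOf (P.edges[j]'hj))).length = 0 := by omega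
        simp only [hz]
        exact (List.head_eq_getElem hb₁).symm
      have hsrcp : src (Q2'.edges[Q2.edges.idxOf (P.edges[j]'hj)]'hplt')
          = src (P.edges[j]'hj) := by rw [hgp, hn₁]
      have hsrcj : src (Q2'.edges[j]'hlen2') = src (P.edges[j]'hj) :=
        src_getElem_of_mem hj hmem hlen2'
      have hpj : Q2.edges.idxOf (P.edges[j]'hj) = j :=
        src_getElem_inj hdag Q2' hplt' hlen2' (hsrcp.trans hsrcj.symm)
      have h4 : Q2'.edges.take ((Q2.edges.take (Q2.edges.idxOf (P.edges[j]'hj))).length)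
          = Q2.edges.take (Q2.edges.idxOf (P.edges[j]'hj)) := by
        rw [h2']
        exact List.take_left
      have htk : Q2.edges.take j = P.edges.take j := by
        have h3 : Q2'.edges.take j = P.edges.take j := take_eq_of_mem hj.le hmem
        calc Q2.edges.take j = Q2.edges.take (Q2.edges.idxOf (P.edges[j]'hj)) := by
              rw [hpj]
          _ = Q2'.edges.take ((Q2.edges.take (Q2.edges.idxOf (P.edges[j]'hj))).length) :=
              h4.symm
          _ = Q2'.edges.take j := by rw [hpa, hpj]
          _ = P.edges.take j := h3
      exact hQ2nj (mem_clS.mpr (by rw [← htk]; exact List.take_prefix _ _))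
    have hQ2'ej : P.edges[j]'hj ∉ Q2'.edges := by
      rw [h2']
      intro hmem
      rcases List.mem_append.mp hmem with h | h
      · have hdisj := List.disjoint_of_nodup_append (h2 ▸ edges_nodup hdag Q2)
        have hm := List.head_mem hb₂
        rw [hb2h] at hm
        exact hdisj h hm
      · exact he1 (List.mem_of_mem_drop h)
    -- distinctness
    have d12 : Q1 ≠ Q2 := fun h => he1 (h ▸ hQ2e)
    have d11' : Q1 ≠ Q1' := fun h => he1 (h ▸ hQ1'ej)
    have d12' : Q1 ≠ Q2' := fun h => hQ2'nj (h ▸ hQ1j)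
    have d21' : Q2 ≠ Q1' := fun h => hQ2n (h ▸ hQ1'cl)
    have d22' : Q2 ≠ Q2' := fun h => hQ2'ej (h ▸ hQ2e)
    have d1'2' : Q1' ≠ Q2' := fun h => hQ2'ej (h ▸ hQ1'ej)
    -- the swap
    set R : GPath src tgt s t → ℝ := indP src tgt s t Q1' + indP src tgt s t Q2'
      - indP src tgt s t Q1 - indP src tgt s t Q2 with hRdef
    have hRS : IsRyserSwap src tgt s t R :=
      ⟨src (P.edges[j]'hj), Q1, Q2, Q1', Q2', hconj, hRdef⟩
    set c : ℝ := min (σ Q1) (min (σ Q2) (v - AA src tgt s t P (j+1) σ)) with hcdef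
    have hc1 : c ≤ σ Q1 := min_le_left _ _
    have hc2 : c ≤ σ Q2 := le_trans (min_le_right _ _) (min_le_left _ _)
    have hcd : c ≤ v - AA src tgt s t P (j+1) σ :=
      le_trans (min_le_right _ _) (min_le_right _ _)
    have hcpos : 0 < c := lt_min hQ1pos (lt_min hQ2pos (by linarith))
    have hval : ∀ Q, (σ + c • R) Q = σ Q + c *
        ((if Q = Q1' then (1:ℝ) else 0) + (if Q = Q2' then (1:ℝ) else 0)
          - (if Q = Q1 then (1:ℝ) else 0) - (if Q = Q2 then (1:ℝ) else 0)) := by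
      intro Q
      simp [hRdef, indP, smul_eq_mul]
    have hvQ1 : (σ + c • R) Q1 = σ Q1 - c := by
      rw [hval, if_neg d11', if_neg d12', if_pos rfl, if_neg d12]; ring
    have hvQ2 : (σ + c • R) Q2 = σ Q2 - c := by
      rw [hval, if_neg d21', if_neg d22', if_neg d12.symm, if_pos rfl]; ring
    have hdec' : IsPathDecomp src tgt s t f (σ + c • R) := by
      constructor
      · intro Q
        by_cases e1 : Q = Q1
        · rw [e1, hvQ1]; linarith
        by_cases e2 : Q = Q2
        · rw [e2, hvQ2]; linarith
        rw [hval, if_neg e1, if_neg e2]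
        have h01 : (0:ℝ) ≤ (if Q = Q1' then (1:ℝ) else 0) := by positivity
        have h02 : (0:ℝ) ≤ (if Q = Q2' then (1:ℝ) else 0) := by positivity
        have := hσ.1 Q
        nlinarith
      · intro e
        rw [finsum_eq_sum_of_fintype]
        have hsplit : ∀ Q : GPath src tgt s t, (if e ∈ Q.edges then (σ + c • R) Q else 0)
            = (if e ∈ Q.edges then σ Q else 0) + c * (if e ∈ Q.edges then R Q else 0) := by
          intro Q; by_cases h : e ∈ Q.edges <;> simp [h]
        rw [Finset.sum_congr rfl (fun Q _ => hsplit Q), Finset.sum_add_distrib,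
          ← Finset.mul_sum]
        have h0 : ∑ Q : GPath src tgt s t, (if e ∈ Q.edges then R Q else 0) = 0 := by
          have := swap_edge_sum_zero hdag h1 h2 h1' h2' e
          simpa [hRdef] using this
        rw [h0, mul_zero, add_zero, ← decomp_sum hσ e]
    have hAAj1 : AA src tgt s t P (j+1) (σ + c • R) = AA src tgt s t P (j+1) σ + c := by
      rw [hRdef, AA_swap, if_pos hQ1'cl,
        if_neg (fun h => hQ2'nj (clS_mono h)), if_neg hQ1n, if_neg hQ2n]
      ring
    have hAAj : AA src tgt s t P j (σ + c • R) = AA src tgt s t P j σ := by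
      rw [hRdef, AA_swap, if_pos (clS_mono hQ1'cl), if_neg hQ2'nj, if_pos hQ1j,
        if_neg hQ2nj]
      ring
    by_cases hcv : c = v - AA src tgt s t P (j+1) σ
    · refine ⟨1, fun _ => c, fun _ => R, fun i => ⟨hcpos, hRS⟩, ?_, ?_⟩
      · rw [Fin.sum_univ_one]; exact hdec'
      · rw [Fin.sum_univ_one, hAAj1, hcv]; linarith
    · -- c = σ Q1 or σ Q2 ; measure decreases
      have hc12 : c = σ Q1 ∨ c = σ Q2 := by
        rcases min_cases (σ Q1) (min (σ Q2) (v - AA src tgt s t P (j+1) σ)) with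
          ⟨h, -⟩ | ⟨h, -⟩
        · exact Or.inl (hcdef.trans h)
        · rcases min_cases (σ Q2) (v - AA src tgt s t P (j+1) σ) with ⟨h', -⟩ | ⟨h', -⟩
          · exact Or.inr ((hcdef.trans h).trans h')
          · exact absurd ((hcdef.trans h).trans h') hcv
      obtain ⟨X0, hX0mem, hX0pos, hX0zero⟩ :
          ∃ X0, X0 ∈ ((clS src tgt s t P j ∪ Finset.univ.filter
            (fun Q => P.edges[j]'hj ∈ Q.edges)) \ clS src tgt s t P (j+1))
            ∧ 0 < σ X0 ∧ (σ + c • R) X0 = 0 := by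
        rcases hc12 with h | h
        · exact ⟨Q1, by rw [Finset.mem_sdiff, Finset.mem_union]; exact ⟨Or.inl hQ1j, hQ1n⟩,
            hQ1pos, by rw [hvQ1, h]; ring⟩
        · exact ⟨Q2, by
            rw [Finset.mem_sdiff, Finset.mem_union, Finset.mem_filter]
            exact ⟨Or.inr ⟨Finset.mem_univ _, hQ2e⟩, hQ2n⟩,
            hQ2pos, by rw [hvQ2, h]; ring⟩
      have hQ1'nD : Q1' ∉ ((clS src tgt s t P j ∪ Finset.univ.filter
          (fun Q => P.edges[j]'hj ∈ Q.edges)) \ clS src tgt s t P (j+1)) := by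
        rw [Finset.mem_sdiff]
        exact fun h => h.2 hQ1'cl
      have hQ2'nD : Q2' ∉ ((clS src tgt s t P j ∪ Finset.univ.filter
          (fun Q => P.edges[j]'hj ∈ Q.edges)) \ clS src tgt s t P (j+1)) := by
        rw [Finset.mem_sdiff, Finset.mem_union, Finset.mem_filter]
        rintro ⟨h | ⟨-, h⟩, -⟩
        · exact hQ2'nj h
        · exact hQ2'ej h
      have hsubset : ((clS src tgt s t P j ∪ Finset.univ.filter
            (fun Q => P.edges[j]'hj ∈ Q.edges)) \ clS src tgt s t P (j+1)).filter
            (fun Q => 0 < (σ + c • R) Q)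
          ⊆ (((clS src tgt s t P j ∪ Finset.univ.filter
            (fun Q => P.edges[j]'hj ∈ Q.edges)) \ clS src tgt s t P (j+1)).filter
            (fun Q => 0 < σ Q)).erase X0 := by
        intro Q hQ
        rw [Finset.mem_filter] at hQ
        rw [Finset.mem_erase, Finset.mem_filter]
        have hne1' : Q ≠ Q1' := fun h => hQ1'nD (h ▸ hQ.1)
        have hne2' : Q ≠ Q2' := fun h => hQ2'nD (h ▸ hQ.1)
        have hle : (σ + c • R) Q ≤ σ Q := by
          rw [hval, if_neg hne1', if_neg hne2']
          have h01 : (0:ℝ) ≤ (if Q = Q1 then (1:ℝ) else 0) := by positivity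
          have h02 : (0:ℝ) ≤ (if Q = Q2 then (1:ℝ) else 0) := by positivity
          nlinarith
        refine ⟨fun h => ?_, hQ.1, by linarith [hQ.2]⟩
        rw [h, hX0zero] at hQ
        exact lt_irrefl _ hQ.2
      have hcard : (((clS src tgt s t P j ∪ Finset.univ.filter
            (fun Q => P.edges[j]'hj ∈ Q.edges)) \ clS src tgt s t P (j+1)).filter
            (fun Q => 0 < (σ + c • R) Q)).card ≤ n := by
        have h5 := Finset.card_le_card hsubset
        have h6 : X0 ∈ ((clS src tgt s t P j ∪ Finset.univ.filter
            (fun Q => P.edges[j]'hj ∈ Q.edges)) \ clS src tgt s t P (j+1)).filter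
            (fun Q => 0 < σ Q) := Finset.mem_filter.mpr ⟨hX0mem, hX0pos⟩
        have h7 := Finset.card_erase_of_mem h6
        have h8 := Finset.card_pos.mpr ⟨X0, h6⟩
        omega
      obtain ⟨m', c', R', hprop', hdec'', hA''⟩ :=
        ih (σ + c • R) hcard hdec' (by rw [hAAj]; exact hA)
      refine ⟨m' + 1, Fin.cons c c', Fin.cons R R', ?_, ?_, ?_⟩
      · intro i
        refine Fin.cases ?_ (fun i => ?_) i
        · simpa using ⟨hcpos, hRS⟩
        · simpa using hprop' i
      · have hfun : (fun i : Fin (m'+1) => (Fin.cons c c' : Fin (m'+1) → ℝ) i •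
            (Fin.cons R R' : Fin (m'+1) → (GPath src tgt s t → ℝ)) i)
            = Fin.cons (c • R) (fun i : Fin m' => c' i • R' i) := by
          funext i
          refine Fin.cases ?_ (fun i => ?_) i <;> simp
        rw [hfun, Fin.sum_cons, ← add_assoc]
        exact hdec''
      · have hfun : (fun i : Fin (m'+1) => (Fin.cons c c' : Fin (m'+1) → ℝ) i •
            (Fin.cons R R' : Fin (m'+1) → (GPath src tgt s t → ℝ)) i)
            = Fin.cons (c • R) (fun i : Fin m' => c' i • R' i) := by
          funext i
          refine Fin.cases ?_ (fun i => ?_) i <;> simp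
        rw [hfun, Fin.sum_cons, ← add_assoc]
        exact hA''

lemma outer (hdag : IsDAG src tgt s t) (f : E → ℝ) (π π' : GPath src tgt s t → ℝ)
    (hπ : IsPathDecomp src tgt s t f π) (hπ' : IsPathDecomp src tgt s t f π')
    (P : GPath src tgt s t) :
    ∀ j, j ≤ P.edges.length →
      ∃ (m : ℕ) (c : Fin m → ℝ) (R : Fin m → (GPath src tgt s t → ℝ)),
        (∀ i, 0 < c i ∧ IsRyserSwap src tgt s t (R i)) ∧
        IsPathDecomp src tgt s t f (π' + ∑ i, c i • R i) ∧
        π P ≤ AA src tgt s t P j (π' + ∑ i, c i • R i) := by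
  intro j
  induction j with
  | zero =>
    intro _
    refine ⟨0, Fin.elim0, Fin.elim0, fun i => i.elim0, by simpa using hπ', ?_⟩
    have hz : π' + ∑ i : Fin 0, (Fin.elim0 : Fin 0 → ℝ) i •
        (Fin.elim0 : Fin 0 → GPath src tgt s t → ℝ) i = π' := by
      simp
    rw [hz]
    unfold AA
    rw [clS_zero, total_mass hdag hπ', ← total_mass hdag hπ]
    exact Finset.single_le_sum (fun Q _ => hπ.1 Q) (Finset.mem_univ P)
  | succ j ihj =>
    intro hj1
    have hj : j < P.edges.length := hj1
    obtain ⟨m₁, c₁, R₁, hp₁, hdec₁, hA₁⟩ := ihj hj.le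
    have hfe : π P ≤ f (P.edges[j]'hj) := by
      rw [decomp_sum hπ]
      have hnn : ∀ Q ∈ Finset.univ,
          (0:ℝ) ≤ (if P.edges[j]'hj ∈ Q.edges then π Q else 0) := by
        intro Q _
        by_cases h : P.edges[j]'hj ∈ Q.edges <;> simp [h, hπ.1 Q]
      have := Finset.single_le_sum (f := fun Q : GPath src tgt s t =>
        if P.edges[j]'hj ∈ Q.edges then π Q else 0) hnn (Finset.mem_univ P)
      simpa [List.getElem_mem hj] using this
    obtain ⟨m₂, c₂, R₂, hp₂, hdec₂, hA₂⟩ :=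
      stage hdag f P hj (π P) hfe _ (π' + ∑ i, c₁ i • R₁ i) le_rfl hdec₁ hA₁
    have hsum : (∑ i : Fin (m₁+m₂), Fin.append c₁ c₂ i • Fin.append R₁ R₂ i)
        = (∑ i : Fin m₁, c₁ i • R₁ i) + ∑ i : Fin m₂, c₂ i • R₂ i := by
      rw [Fin.sum_univ_add]
      congr 1
      · exact Finset.sum_congr rfl (fun i _ => by rw [Fin.append_left, Fin.append_left])
      · exact Finset.sum_congr rfl (fun i _ => by rw [Fin.append_right, Fin.append_right])
    refine ⟨m₁ + m₂, Fin.append c₁ c₂, Fin.append R₁ R₂, ?_, ?_, ?_⟩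
    · intro i
      refine Fin.addCases (fun i => ?_) (fun i => ?_) i
      · rw [Fin.append_left, Fin.append_left]; exact hp₁ i
      · rw [Fin.append_right, Fin.append_right]; exact hp₂ i
    · rw [hsum, ← add_assoc]; exact hdec₂
    · rw [hsum, ← add_assoc]; exact hA₂

end Part3
end ZipperAux


/-- Zipper Lemma 2. -/
theorem statement11 (hdag : IsDAG src tgt s t) (f : E → ℝ)
    (hf : IsQuasiFlow src tgt s t f)
    (π π' : GPath src tgt s t → ℝ)
    (hπ : IsPathDecomp src tgt s t f π) (hπ' : IsPathDecomp src tgt s t f π')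
    (P : GPath src tgt s t) (hP : π P ≠ 0) :
    ∃ (m : ℕ) (c : Fin m → ℝ) (R : Fin m → (GPath src tgt s t → ℝ)),
      (∀ i, 0 < c i ∧ IsRyserSwap src tgt s t (R i)) ∧
      IsPathDecomp src tgt s t f (π' + ∑ i, c i • R i) ∧
      π P ≤ (π' + ∑ i, c i • R i) P := by
  haveI : Finite (GPath src tgt s t) := gpath_finite hdag
  haveI : Fintype (GPath src tgt s t) := Fintype.ofFinite _
  obtain ⟨m, c, R, hp, hdec, hA⟩ := outer hdag f π π' hπ hπ' P P.edges.length le_rfl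
  refine ⟨m, c, R, hp, hdec, ?_⟩
  have heq : AA src tgt s t P P.edges.length (π' + ∑ i, c i • R i)
      = (π' + ∑ i, c i • R i) P := by
    unfold AA
    rw [clS_top hdag, Finset.sum_singleton]
  rw [heq] at hA
  exact hA

end StmtDAG
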